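/- arXiv:1309.5566 — 2 statements merged into one kernel-verified Lean document; each statement's English description precedes it below -/
import Mathlib

section
/- The Bessel function J_λ defined by the power series J_λ(z) = (z/2)^λ Σ_{n=0}^∞ (−z²)^n / (2^{2n} n! Γ(n+λ+1)) satisfies z² J_λ''(z) + z J_λ'(z) + (z² − λ²) J_λ(z) = 0 for z in ℂ minus a branch cut (or for z > 0 real). -/
open Complex

noncomputable def bc (lam : ℂ) (m : ℕ) : ℂ :=
  (-1) ^ m / (4 ^ m * (Nat.factorial m : ℂ) * Complex.Gamma ((m : ℂ) + lam + 1))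

lemma bc_rec (lam : ℂ) (m : ℕ) :
    4 * ((m : ℂ) + 1) * (((m : ℂ) + 1) + lam) * bc lam (m + 1) + bc lam m = 0 := by
  have hcast : ((m + 1 : ℕ) : ℂ) + lam + 1 = ((m : ℂ) + lam + 1) + 1 := by push_cast; ring
  set w : ℂ := (m : ℂ) + lam + 1 with hw
  by_cases hw0 : w = 0
  · have h1 : bc lam m = 0 := by
      have : Complex.Gamma ((m : ℂ) + lam + 1) = 0 := by rw [← hw, hw0, Complex.Gamma_zero]
      simp [bc, this]
    have h2 : ((m : ℂ) + 1) + lam = 0 := by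
      have : w = (m : ℂ) + 1 + lam := by rw [hw]; ring
      rw [← this, hw0]
    rw [h1, h2]; ring
  · have hG : Complex.Gamma (((m + 1 : ℕ) : ℂ) + lam + 1) = w * Complex.Gamma w := by
      rw [hcast, Complex.Gamma_add_one w hw0]
    by_cases hGz : Complex.Gamma w = 0
    · have h1 : bc lam m = 0 := by simp [bc, ← hw, hGz]
      have h2 : bc lam (m + 1) = 0 := by
        rw [bc]
        rw [show ((m + 1 : ℕ) : ℂ) + lam + 1 = w + 1 from hcast, Complex.Gamma_add_one w hw0, hGz]
        simp
      rw [h1, h2]; ring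
    · have hfac : (Nat.factorial (m + 1) : ℂ) = ((m : ℂ) + 1) * (Nat.factorial m : ℂ) := by
        push_cast [Nat.factorial_succ]; ring
      rw [bc, bc, hG, hfac, ← hw]
      have h4 : (4 : ℂ) ^ (m + 1) = 4 * 4 ^ m := by ring
      rw [h4]
      have hne1 : ((m : ℂ) + 1) ≠ 0 := by
        exact_mod_cast Nat.cast_add_one_ne_zero (R := ℂ) m
      have hne2 : (4 : ℂ) ^ m ≠ 0 := pow_ne_zero m (by norm_num)
      have hne3 : (Nat.factorial m : ℂ) ≠ 0 := by
        exact_mod_cast Nat.cast_ne_zero.mpr (Nat.factorial_ne_zero m)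
      have hwlam : ((m : ℂ) + 1) + lam = w := by rw [hw]; ring
      rw [hwlam]
      field_simp
      ring

noncomputable def bc1 (lam : ℂ) (m : ℕ) : ℂ := ((m : ℂ) + 1) * bc lam (m + 1)
noncomputable def bc2 (lam : ℂ) (m : ℕ) : ℂ := ((m : ℂ) + 1) * bc1 lam (m + 1)

lemma norm_cast_add_one (m : ℕ) : ‖((m : ℂ) + 1)‖ = (m : ℝ) + 1 := by
  have h : ((m : ℂ) + 1) = ((m + 1 : ℕ) : ℂ) := by push_cast; ring
  rw [h, Complex.norm_natCast]; push_cast; ring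

lemma bc_norm_rec (lam : ℂ) (m : ℕ) :
    ‖bc lam m‖ = (4 * ((m : ℝ) + 1) * ‖((m : ℂ) + 1) + lam‖) * ‖bc lam (m + 1)‖ := by
  have h : bc lam m = -(4 * ((m : ℂ) + 1) * (((m : ℂ) + 1) + lam)) * bc lam (m + 1) := by
    linear_combination bc_rec lam m
  rw [h, norm_mul, norm_neg, norm_mul, norm_mul, norm_cast_add_one]
  norm_num

lemma bc_summable_aux (lam : ℂ) (k : ℕ) (φ : ℕ → ℝ) (hφ : ∀ m, 0 < φ m)
    (hφ4 : ∀ m, φ (m + 1) ≤ 4 * φ m) (r : ℝ) (hr : 0 ≤ r) :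
    Summable fun m => φ m * ‖bc lam (m + k)‖ * r ^ m := by
  obtain ⟨N, hN⟩ := exists_nat_ge (‖lam‖ + r)
  apply summable_of_ratio_norm_eventually_le (r := 1/2) (by norm_num)
  filter_upwards [Filter.eventually_ge_atTop (N + 1)] with m hm
  have hmR : ((N : ℝ) + 1) ≤ (m : ℝ) := by exact_mod_cast hm
  set θ : ℝ := ‖((m + k : ℕ) : ℂ) + 1 + lam‖ with hθdef
  have hθ : r + 1 ≤ θ := by
    have h1 := norm_sub_norm_le (((m + k : ℕ) : ℂ) + 1) (-lam)
    rw [sub_neg_eq_add, norm_neg, norm_cast_add_one] at h1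
    have h2 : (m : ℝ) ≤ ((m + k : ℕ) : ℝ) := by push_cast; linarith [Nat.cast_nonneg (α := ℝ) k]
    linarith
  have hm2 : 2 ≤ ((m + k : ℕ) : ℝ) + 1 := by
    have : (1 : ℝ) ≤ ((m + k : ℕ) : ℝ) := by
      have : (1 : ℕ) ≤ m + k := le_trans (Nat.one_le_iff_ne_zero.mpr (by omega)) le_rfl
      exact_mod_cast this
    linarith
  have hθ0 : 0 ≤ θ := norm_nonneg _
  have hrec : ‖bc lam (m + k)‖
      = (4 * (((m + k : ℕ) : ℝ) + 1) * θ) * ‖bc lam (m + k + 1)‖ := by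
    exact bc_norm_rec lam (m + k)
  have h2θ : 2 * (r + 1) ≤ (((m + k : ℕ) : ℝ) + 1) * θ :=
    mul_le_mul hm2 hθ (by linarith) (by linarith)
  have key : φ (m + 1) * r ≤ 1/2 * (φ m * (4 * (((m + k : ℕ) : ℝ) + 1) * θ)) := by
    nlinarith [mul_le_mul_of_nonneg_right (hφ4 m) hr, hφ m,
      mul_le_mul_of_nonneg_left (show 2 * r ≤ (((m + k : ℕ) : ℝ) + 1) * θ by linarith) (le_of_lt (hφ m))]
  have hB : (0 : ℝ) ≤ ‖bc lam (m + k + 1)‖ := norm_nonneg _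
  have hP : (0 : ℝ) ≤ r ^ m := pow_nonneg hr m
  rw [Real.norm_of_nonneg (mul_nonneg (mul_nonneg (hφ _).le (norm_nonneg _)) (pow_nonneg hr _)),
    Real.norm_of_nonneg (mul_nonneg (mul_nonneg (hφ _).le (norm_nonneg _)) (pow_nonneg hr _))]
  have hmk1 : m + 1 + k = m + k + 1 := by omega
  calc φ (m + 1) * ‖bc lam (m + 1 + k)‖ * r ^ (m + 1)
      = (φ (m + 1) * r) * (‖bc lam (m + k + 1)‖ * r ^ m) := by rw [hmk1]; ring
    _ ≤ (1/2 * (φ m * (4 * (((m + k : ℕ) : ℝ) + 1) * θ))) * (‖bc lam (m + k + 1)‖ * r ^ m) := by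
        exact mul_le_mul_of_nonneg_right key (mul_nonneg hB hP)
    _ = 1/2 * (φ m * ((4 * (((m + k : ℕ) : ℝ) + 1) * θ) * ‖bc lam (m + k + 1)‖) * r ^ m) := by ring
    _ = 1/2 * (φ m * ‖bc lam (m + k)‖ * r ^ m) := by rw [← hrec]

lemma bc_summable0 (lam : ℂ) (r : ℝ) (hr : 0 ≤ r) :
    Summable fun m => ‖bc lam m‖ * r ^ m := by
  have := bc_summable_aux lam 0 (fun _ => 1) (fun _ => one_pos) (fun _ => by norm_num) r hr
  simpa using this

lemma bc_summable1 (lam : ℂ) (r : ℝ) (hr : 0 ≤ r) :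
    Summable fun m => ‖bc1 lam m‖ * r ^ m := by
  have h := bc_summable_aux lam 1 (fun m => (m : ℝ) + 1) (fun m => by positivity)
    (fun m => by push_cast; nlinarith [Nat.cast_nonneg (α := ℝ) m]) r hr
  apply h.congr
  intro m
  simp only [bc1, norm_mul, norm_cast_add_one]

lemma bc_summable2 (lam : ℂ) (r : ℝ) (hr : 0 ≤ r) :
    Summable fun m => ‖bc2 lam m‖ * r ^ m := by
  have h := bc_summable_aux lam 2 (fun m => ((m : ℝ) + 1) * ((m : ℝ) + 2))
    (fun m => by positivity)
    (fun m => by push_cast; nlinarith [Nat.cast_nonneg (α := ℝ) m]) r hr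
  apply h.congr
  intro m
  simp only [bc2, bc1, norm_mul, norm_cast_add_one]
  rw [show m + 1 + 1 = m + 2 by omega]
  push_cast
  ring

set_option maxHeartbeats 1000000 in
lemma hasDerivAt_tsum_power (a b : ℕ → ℂ)
    (ha : ∀ r : NNReal, Summable fun n => ‖a n‖ * (r : ℝ) ^ n)
    (hb : ∀ r : NNReal, Summable fun n => ‖b n‖ * (r : ℝ) ^ n)
    (hab : ∀ n, b n = ((n : ℂ) + 1) * a (n + 1)) {z : ℂ} (hz : z ≠ 0) :
    HasDerivAt (fun w => ∑' n, a n * w ^ n) (∑' n, b n * z ^ n) z := by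
  set p := FormalMultilinearSeries.ofScalars ℂ a with hp
  have hpr : p.radius = ⊤ := p.radius_eq_top_of_summable_norm (fun r => by
    simpa only [hp, FormalMultilinearSeries.ofScalars_norm] using ha r)
  have hball : z ∈ EMetric.ball (0 : ℂ) p.radius := by
    rw [hpr]; exact EMetric.mem_ball.mpr (edist_lt_top z 0)
  have hps : HasFPowerSeriesOnBall p.sum p 0 p.radius :=
    p.hasFPowerSeriesOnBall (by rw [hpr]; exact ENNReal.zero_lt_top)
  have hgeq : (fun w => ∑' n, a n * w ^ n) = p.sum := by
    funext w
    simp only [FormalMultilinearSeries.sum, hp,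
      FormalMultilinearSeries.ofScalars_apply_eq, smul_eq_mul]
  rw [hgeq]
  have hdiff : DifferentiableAt ℂ p.sum z :=
    ((hps.analyticAt_of_mem hball)).differentiableAt
  have hfd : HasFPowerSeriesOnBall (fderiv ℂ p.sum) p.derivSeries 0 p.radius := hps.fderiv
  have hs1 : HasSum (fun n => p.derivSeries n fun _ => z) (fderiv ℂ p.sum (0 + z)) :=
    hfd.hasSum hball
  have hs2 := (ContinuousLinearMap.apply ℂ ℂ z).hasSum hs1
  have hterm : (fun n => (p.derivSeries n fun _ => z) z) = fun n => z * (b n * z ^ n) := by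
    funext n
    rw [p.derivSeries_apply_diag]
    simp only [hp, FormalMultilinearSeries.ofScalars_apply_eq, smul_eq_mul, nsmul_eq_mul, hab]
    push_cast
    ring
  simp only [ContinuousLinearMap.apply_apply] at hs2
  rw [hterm] at hs2
  have hbs : Summable fun n => b n * z ^ n := by
    apply Summable.of_norm
    have := hb ⟨‖z‖, norm_nonneg z⟩
    simpa [norm_mul, norm_pow] using (show Summable fun n => ‖b n‖ * ‖z‖ ^ n from this)
  have hs3 : HasSum (fun n => z * (b n * z ^ n)) (z * ∑' n, b n * z ^ n) :=
    hbs.hasSum.mul_left z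
  have hkey : (fderiv ℂ p.sum (0 + z)) z = z * ∑' n, b n * z ^ n := hs2.unique hs3
  rw [zero_add] at hkey
  have heval : (fderiv ℂ p.sum z) z = z * deriv p.sum z := by
    have h1 : z = z • (1 : ℂ) := by simp
    conv_lhs => rw [h1]
    rw [map_smul, fderiv_apply_one_eq_deriv]
    simp [smul_eq_mul]
  have hd : deriv p.sum z = ∑' n, b n * z ^ n := by
    apply mul_left_cancel₀ hz
    rw [← heval, hkey]
  exact hd ▸ hdiff.hasDerivAt

section

variable (lam u : ℂ)

lemma summable_term0 : Summable fun m => bc lam m * u ^ m := by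
  apply Summable.of_norm
  have := bc_summable0 lam ‖u‖ (norm_nonneg u)
  simpa [norm_mul, norm_pow] using this

lemma summable_term1 : Summable fun m => bc1 lam m * u ^ m := by
  apply Summable.of_norm
  have := bc_summable1 lam ‖u‖ (norm_nonneg u)
  simpa [norm_mul, norm_pow] using this

lemma summable_term2 : Summable fun m => bc2 lam m * u ^ m := by
  apply Summable.of_norm
  have := bc_summable2 lam ‖u‖ (norm_nonneg u)
  simpa [norm_mul, norm_pow] using this

noncomputable def Dc (lam : ℂ) (m : ℕ) : ℂ := if m = 0 then 0 else 4 * bc2 lam (m - 1)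

lemma Dc_succ (k : ℕ) : Dc lam (k + 1) = 4 * bc2 lam k := by simp [Dc]

lemma Dc_support : Function.support (fun m => Dc lam m * u ^ m) ⊆ Set.range Nat.succ := by
  intro m hm
  rcases m with _ | k
  · simp [Dc] at hm
  · exact ⟨k, rfl⟩

lemma summable_D : Summable fun m => Dc lam m * u ^ m := by
  apply (Function.Injective.summable_iff Nat.succ_injective ?_).mp
  · have h : Summable fun k => (4 * u) * (bc2 lam k * u ^ k) := (summable_term2 lam u).mul_left _
    apply h.congr
    intro k
    show (4 * u) * (bc2 lam k * u ^ k) = Dc lam (k + 1) * u ^ (k + 1)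
    rw [Dc_succ]; ring
  · intro m hm
    by_contra h
    exact hm (Dc_support lam u (Function.mem_support.mpr h))

lemma h2eq : 4 * u * (∑' m, bc2 lam m * u ^ m) = ∑' m, Dc lam m * u ^ m := by
  rw [← tsum_mul_left]
  calc ∑' m, 4 * u * (bc2 lam m * u ^ m)
      = ∑' k, (fun m => Dc lam m * u ^ m) (Nat.succ k) := by
        apply tsum_congr; intro k
        show 4 * u * (bc2 lam k * u ^ k) = Dc lam (k + 1) * u ^ (k + 1)
        rw [Dc_succ]; ring
    _ = ∑' m, Dc lam m * u ^ m :=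
        Function.Injective.tsum_eq Nat.succ_injective (Dc_support lam u)

lemma coeff_zero : ∀ m, Dc lam m + (4 * (lam + 1) * bc1 lam m + bc lam m) = 0 := by
  intro m
  rcases m with _ | k
  · simp only [Dc, if_pos rfl, bc1]
    have h := bc_rec lam 0
    push_cast at h ⊢
    linear_combination h
  · rw [Dc_succ]
    simp only [bc2, bc1]
    have h := bc_rec lam (k + 1)
    push_cast at h ⊢
    linear_combination h

lemma key_identity :
    4 * u ^ 2 * (∑' m, bc2 lam m * u ^ m) + 4 * (lam + 1) * u * (∑' m, bc1 lam m * u ^ m)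
      + u * (∑' m, bc lam m * u ^ m) = 0 := by
  have h01 : 4 * (lam + 1) * (∑' m, bc1 lam m * u ^ m) + (∑' m, bc lam m * u ^ m)
      = ∑' m, (4 * (lam + 1) * bc1 lam m + bc lam m) * u ^ m := by
    rw [← tsum_mul_left, ← Summable.tsum_add ((summable_term1 lam u).mul_left _) (summable_term0 lam u)]
    apply tsum_congr; intro m; ring
  have hsum01 : Summable fun m => (4 * (lam + 1) * bc1 lam m + bc lam m) * u ^ m := by
    apply (((summable_term1 lam u).mul_left (4 * (lam + 1))).add (summable_term0 lam u)).congr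
    intro m; ring
  have hzero : (∑' m, Dc lam m * u ^ m)
      + (∑' m, (4 * (lam + 1) * bc1 lam m + bc lam m) * u ^ m) = 0 := by
    rw [← Summable.tsum_add (summable_D lam u) hsum01]
    have : ∀ m, Dc lam m * u ^ m + (4 * (lam + 1) * bc1 lam m + bc lam m) * u ^ m = 0 := by
      intro m
      have h := coeff_zero lam m
      linear_combination u ^ m * h
    simp only [this, tsum_zero]
  calc 4 * u ^ 2 * (∑' m, bc2 lam m * u ^ m)
        + 4 * (lam + 1) * u * (∑' m, bc1 lam m * u ^ m) + u * (∑' m, bc lam m * u ^ m)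
      = u * (4 * u * (∑' m, bc2 lam m * u ^ m))
        + u * (4 * (lam + 1) * (∑' m, bc1 lam m * u ^ m) + (∑' m, bc lam m * u ^ m)) := by ring
    _ = u * ((∑' m, Dc lam m * u ^ m)
        + (∑' m, (4 * (lam + 1) * bc1 lam m + bc lam m) * u ^ m)) := by rw [h2eq, h01]; ring
    _ = 0 := by rw [hzero, mul_zero]

end

/-- The Bessel function of the first kind, `J_λ(z) = (z/2)^λ ∑ (-z²)^n / (2^{2n} n! Γ(n+λ+1))`. -/
noncomputable def besselJ (lam : ℂ) (z : ℂ) : ℂ :=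
  (z / 2) ^ lam *
    ∑' n : ℕ, (-z ^ 2) ^ n / (2 ^ (2 * n) * (Nat.factorial n : ℂ) * Complex.Gamma ((n : ℂ) + lam + 1))

lemma besselJ_eq (lam z : ℂ) : besselJ lam z = (z / 2) ^ lam * ∑' m, bc lam m * (z ^ 2) ^ m := by
  unfold besselJ
  congr 1
  apply tsum_congr
  intro n
  rw [bc]
  have h1 : ((2 : ℂ)) ^ (2 * n) = 4 ^ n := by rw [pow_mul]; norm_num
  rw [h1]
  ring

noncomputable def Gb0 (lam w : ℂ) : ℂ := ∑' m, bc lam m * w ^ m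
noncomputable def Gb1 (lam w : ℂ) : ℂ := ∑' m, bc1 lam m * w ^ m
noncomputable def Gb2 (lam w : ℂ) : ℂ := ∑' m, bc2 lam m * w ^ m


lemma hasDerivAt_Gb0 (lam : ℂ) {w : ℂ} (hw : w ≠ 0) : HasDerivAt (Gb0 lam) (Gb1 lam w) w :=
  hasDerivAt_tsum_power (bc lam) (bc1 lam)
    (fun r => bc_summable0 lam r r.coe_nonneg) (fun r => bc_summable1 lam r r.coe_nonneg)
    (fun n => rfl) hw

lemma hasDerivAt_Gb1 (lam : ℂ) {w : ℂ} (hw : w ≠ 0) : HasDerivAt (Gb1 lam) (Gb2 lam w) w :=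
  hasDerivAt_tsum_power (bc1 lam) (bc2 lam)
    (fun r => bc_summable1 lam r r.coe_nonneg) (fun r => bc_summable2 lam r r.coe_nonneg)
    (fun n => rfl) hw

lemma slit_of_re_pos {z : ℂ} (hz : 0 < z.re) : z / 2 ∈ Complex.slitPlane := by
  left
  have h : z / 2 = z * ((2⁻¹ : ℝ) : ℂ) := by push_cast; ring
  rw [h, Complex.mul_re]
  simp only [Complex.ofReal_re, Complex.ofReal_im, mul_zero, sub_zero]
  positivity

lemma hasDerivAt_besselJ (lam : ℂ) {z : ℂ} (hz : 0 < z.re) :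
    HasDerivAt (besselJ lam)
      ((lam * (z / 2) ^ (lam - 1) * (1 / 2)) * Gb0 lam (z ^ 2)
        + (z / 2) ^ lam * (Gb1 lam (z ^ 2) * (2 * z))) z := by
  have hz0 : z ≠ 0 := by
    intro h; rw [h] at hz; simp at hz
  have hz20 : z ^ 2 ≠ 0 := pow_ne_zero 2 hz0
  have hdiv : HasDerivAt (fun w : ℂ => w / 2) (1 / 2) z := by
    simpa using (hasDerivAt_id z).div_const 2
  have hEc : HasDerivAt (fun w => (w / 2) ^ lam) (lam * (z / 2) ^ (lam - 1) * (1 / 2)) z :=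
    hdiv.cpow_const (slit_of_re_pos hz)
  have hsq : HasDerivAt (fun w : ℂ => w ^ 2) (2 * z) z := by
    simpa using hasDerivAt_pow 2 z
  have hGc : HasDerivAt (fun w => Gb0 lam (w ^ 2)) (Gb1 lam (z ^ 2) * (2 * z)) z :=
    (hasDerivAt_Gb0 lam hz20).comp (h := fun w : ℂ => w ^ 2) z hsq
  have hbJ : besselJ lam = fun w => (w / 2) ^ lam * Gb0 lam (w ^ 2) :=
    funext fun w => besselJ_eq lam w
  rw [hbJ]
  exact hEc.mul hGc

/-- For real `z > 0`, the Bessel function satisfies `z² J'' + z J' + (z² - λ²) J = 0`. -/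
theorem bessel_ode (lam : ℂ) (x : ℝ) (hx : 0 < x) :
    (x : ℂ) ^ 2 * deriv (deriv (besselJ lam)) (x : ℂ) + (x : ℂ) * deriv (besselJ lam) (x : ℂ)
      + ((x : ℂ) ^ 2 - lam ^ 2) * besselJ lam (x : ℂ) = 0 := by
  set ξ : ℂ := (x : ℂ) with hξ
  have hξre : 0 < ξ.re := by simpa [hξ] using hx
  have hξ0 : ξ ≠ 0 := by
    intro h; rw [h] at hξre; simp at hξre
  have hξ20 : ξ ^ 2 ≠ 0 := pow_ne_zero 2 hξ0
  have hhalf : ξ / 2 ≠ 0 := div_ne_zero hξ0 two_ne_zero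
  have hderiv_eq : deriv (besselJ lam) =ᶠ[nhds ξ]
      (fun z => (lam * (z / 2) ^ (lam - 1) * (1 / 2)) * Gb0 lam (z ^ 2)
        + (z / 2) ^ lam * (Gb1 lam (z ^ 2) * (2 * z))) := by
    have hU : IsOpen {z : ℂ | 0 < z.re} := isOpen_lt continuous_const Complex.continuous_re
    filter_upwards [hU.mem_nhds hξre] with z hz
    exact (hasDerivAt_besselJ lam hz).deriv
  -- second derivative pieces at ξ
  have hdiv : HasDerivAt (fun w : ℂ => w / 2) (1 / 2) ξ := by
    simpa using (hasDerivAt_id ξ).div_const 2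
  have hslit := slit_of_re_pos hξre
  have hsq : HasDerivAt (fun w : ℂ => w ^ 2) (2 * ξ) ξ := by
    simpa using hasDerivAt_pow 2 ξ
  have t1 : HasDerivAt (fun z : ℂ => lam * (z / 2) ^ (lam - 1) * (1 / 2))
      ((lam * ((lam - 1) * (ξ / 2) ^ (lam - 1 - 1) * (1 / 2))) * (1 / 2)) ξ := by
    exact ((hdiv.cpow_const hslit).const_mul lam).mul_const (1 / 2)
  have t2 : HasDerivAt (fun w : ℂ => Gb0 lam (w ^ 2)) (Gb1 lam (ξ ^ 2) * (2 * ξ)) ξ :=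
    (hasDerivAt_Gb0 lam hξ20).comp (h := fun w : ℂ => w ^ 2) ξ hsq
  have t4 : HasDerivAt (fun z : ℂ => (z / 2) ^ lam) (lam * (ξ / 2) ^ (lam - 1) * (1 / 2)) ξ :=
    hdiv.cpow_const hslit
  have t5a : HasDerivAt (fun w : ℂ => Gb1 lam (w ^ 2)) (Gb2 lam (ξ ^ 2) * (2 * ξ)) ξ :=
    (hasDerivAt_Gb1 lam hξ20).comp (h := fun w : ℂ => w ^ 2) ξ hsq
  have t5b : HasDerivAt (fun w : ℂ => 2 * w) 2 ξ := by
    simpa using (hasDerivAt_id ξ).const_mul (2 : ℂ)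
  have hD2 : HasDerivAt (fun z : ℂ => lam * (z / 2) ^ (lam - 1) * (1 / 2) * Gb0 lam (z ^ 2)
      + (z / 2) ^ lam * (Gb1 lam (z ^ 2) * (2 * z)))
      (lam * ((lam - 1) * (ξ / 2) ^ (lam - 1 - 1) * (1 / 2)) * (1 / 2) * Gb0 lam (ξ ^ 2)
        + lam * (ξ / 2) ^ (lam - 1) * (1 / 2) * (Gb1 lam (ξ ^ 2) * (2 * ξ))
        + (lam * (ξ / 2) ^ (lam - 1) * (1 / 2) * (Gb1 lam (ξ ^ 2) * (2 * ξ))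
          + (ξ / 2) ^ lam * (Gb2 lam (ξ ^ 2) * (2 * ξ) * (2 * ξ) + Gb1 lam (ξ ^ 2) * 2))) ξ :=
    (t1.mul t2).add (t4.mul (t5a.mul t5b))
  have hJ : besselJ lam ξ = (ξ / 2) ^ lam * Gb0 lam (ξ ^ 2) := besselJ_eq lam ξ
  rw [hderiv_eq.deriv_eq, (hasDerivAt_besselJ lam hξre).deriv, hJ, hD2.deriv]
  have hkey : 4 * (ξ ^ 2) ^ 2 * Gb2 lam (ξ ^ 2) + 4 * (lam + 1) * (ξ ^ 2) * Gb1 lam (ξ ^ 2)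
      + (ξ ^ 2) * Gb0 lam (ξ ^ 2) = 0 := key_identity lam (ξ ^ 2)
  have hB2 : (ξ / 2) ^ (lam - 1) = (ξ / 2) ^ (lam - 1 - 1) * (ξ / 2) := by
    have h := Complex.cpow_add (lam - 1 - 1) 1 hhalf
    rw [Complex.cpow_one] at h
    rw [show lam - 1 - 1 + 1 = lam - 1 by ring] at h
    exact h
  have hA2 : (ξ / 2) ^ lam = (ξ / 2) ^ (lam - 1 - 1) * (ξ / 2) * (ξ / 2) := by
    have h := Complex.cpow_add (lam - 1) 1 hhalf
    rw [Complex.cpow_one] at h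
    rw [show lam - 1 + 1 = lam by ring] at h
    rw [h, hB2]
  rw [hA2, hB2]
  linear_combination ((ξ / 2) ^ (lam - 1 - 1) * ξ ^ 2 / 4) * hkey
end

section
/- For parameters α > 0, λ ≠ 0, δ ∈ ℝ and θ = α/2, the function η*(t,q) = C (e^{λt}−1)^{−δ/2} q^{(δ−1)/2} exp(λδt/4 − λq²/(α² tanh(λt/2))), where C = 2^{δ/2+1} α^{−δ} λ^{δ/2} Γ(δ/2)^{−1}, satisfies on (0,∞) × (0,∞) the dual (forward) heat equation with potential: −θ² ∂η*/∂t = −(θ⁴/2) ∂²η*/∂q² + V η*, where V(t,q) = A/q² + Bq², A = α⁴(δ−1)(δ−3)/128, B = λ²/8. -/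
open Real

lemma tanh_hasDerivAt' (x : ℝ) :
    HasDerivAt Real.tanh (1 - Real.tanh x ^ 2) x := by
  have hc : Real.cosh x ≠ 0 := (Real.cosh_pos x).ne'
  have h := (Real.hasDerivAt_sinh x).div (Real.hasDerivAt_cosh x) hc
  have hfun : (Real.sinh / Real.cosh) = Real.tanh := by
    funext y; rw [Pi.div_apply, Real.tanh_eq_sinh_div_cosh]
  rw [hfun] at h
  refine h.congr_deriv ?_
  rw [Real.tanh_eq_sinh_div_cosh]
  have h2 := Real.cosh_sq_sub_sinh_sq x
  field_simp


/-- The function `η*(t,q) = C (e^{λt}-1)^{-δ/2} q^{(δ-1)/2} exp(λδt/4 - λq²/(α² tanh(λt/2)))`,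
with `C = 2^{δ/2+1} α^{-δ} λ^{δ/2} Γ(δ/2)⁻¹`, satisfies the dual (forward) heat equation
with potential `V(t,q) = A/q² + Bq²`. -/
theorem etaStar_solves_dual_heat (α lam δ θ A B C : ℝ) (hα : 0 < α) (hlam : lam ≠ 0)
    (hθ : θ = α / 2)
    (hA : A = α ^ 4 * (δ - 1) * (δ - 3) / 128) (hB : B = lam ^ 2 / 8)
    (hC : C = 2 ^ (δ / 2 + 1) * α ^ (-δ) * lam ^ (δ / 2) * (Real.Gamma (δ / 2))⁻¹)
    (ηs : ℝ → ℝ → ℝ)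
    (hηs : ∀ t q, ηs t q =
      C * (Real.exp (lam * t) - 1) ^ (-(δ / 2)) * q ^ ((δ - 1) / 2) *
        Real.exp (lam * δ * t / 4 - lam * q ^ 2 / (α ^ 2 * Real.tanh (lam * t / 2))))
    (t q : ℝ) (ht : 0 < t) (hq : 0 < q) :
    -(θ ^ 2) * deriv (fun τ => ηs τ q) t
      = -(θ ^ 4 / 2) * deriv (deriv (ηs t)) q + (A / q ^ 2 + B * q ^ 2) * ηs t q := by
  have hα0 : α ≠ 0 := hα.ne'
  have hq0 : q ≠ 0 := hq.ne'
  have hlt : lam * t ≠ 0 := mul_ne_zero hlam ht.ne'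
  have hE1 : Real.exp (lam * t) - 1 ≠ 0 :=
    sub_ne_zero.mpr (fun h => hlt ((Real.exp_eq_one_iff _).mp h))
  have hEpos : (0:ℝ) < Real.exp (lam * t) := Real.exp_pos _
  have hE2 : Real.exp (lam * t) + 1 ≠ 0 := by positivity
  have hSval : Real.tanh (lam * t / 2) = (Real.exp (lam * t) - 1) / (Real.exp (lam * t) + 1) := by
    rw [Real.tanh_eq_sinh_div_cosh, Real.sinh_eq, Real.cosh_eq, Real.exp_neg]
    rw [show lam * t = lam * t / 2 + lam * t / 2 by ring, Real.exp_add]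
    have h0 : Real.exp (lam * t / 2) ≠ 0 := Real.exp_ne_zero _
    have h1 : Real.exp (lam * t / 2) * Real.exp (lam * t / 2) + 1 ≠ 0 := by positivity
    field_simp
    ring_nf
  have hS0 : Real.tanh (lam * t / 2) ≠ 0 := by rw [hSval]; exact div_ne_zero hE1 hE2
  have hαS : α ^ 2 * Real.tanh (lam * t / 2) ≠ 0 := mul_ne_zero (pow_ne_zero _ hα0) hS0
  -- ===== time derivative =====
  have hlin1 : HasDerivAt (fun τ : ℝ => lam * τ) lam t := by
    simpa using (hasDerivAt_id t).const_mul lam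
  have hexp_t : HasDerivAt (fun τ => Real.exp (lam * τ) - 1)
      (Real.exp (lam * t) * lam) t := hlin1.exp.sub_const 1
  have hpow_t : HasDerivAt (fun τ => (Real.exp (lam * τ) - 1) ^ (-(δ / 2)))
      (Real.exp (lam * t) * lam * (-(δ / 2)) * (Real.exp (lam * t) - 1) ^ (-(δ / 2) - 1)) t :=
    hexp_t.rpow_const (Or.inl hE1)
  have hlin2 : HasDerivAt (fun τ : ℝ => lam * τ / 2) (lam / 2) t := hlin1.div_const 2
  have htanh_t : HasDerivAt (fun τ => Real.tanh (lam * τ / 2))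
      ((1 - Real.tanh (lam * t / 2) ^ 2) * (lam / 2)) t := by
    exact (tanh_hasDerivAt' (lam * t / 2)).comp t hlin2
  have hden_t : HasDerivAt (fun τ => α ^ 2 * Real.tanh (lam * τ / 2))
      (α ^ 2 * ((1 - Real.tanh (lam * t / 2) ^ 2) * (lam / 2))) t := htanh_t.const_mul _
  have hfrac_t : HasDerivAt (fun τ => lam * q ^ 2 / (α ^ 2 * Real.tanh (lam * τ / 2)))
      ((0 * (α ^ 2 * Real.tanh (lam * t / 2)) -
        lam * q ^ 2 * (α ^ 2 * ((1 - Real.tanh (lam * t / 2) ^ 2) * (lam / 2)))) /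
        (α ^ 2 * Real.tanh (lam * t / 2)) ^ 2) t :=
    (hasDerivAt_const t (lam * q ^ 2)).div hden_t hαS
  have hlin3 : HasDerivAt (fun τ : ℝ => lam * δ * τ / 4) (lam * δ / 4) t := by
    have : HasDerivAt (fun τ : ℝ => lam * δ * τ) (lam * δ) t := by
      simpa using (hasDerivAt_id t).const_mul (lam * δ)
    simpa using this.div_const 4
  have hGt : HasDerivAt
      (fun τ => lam * δ * τ / 4 - lam * q ^ 2 / (α ^ 2 * Real.tanh (lam * τ / 2)))
      (lam * δ / 4 -
        (0 * (α ^ 2 * Real.tanh (lam * t / 2)) -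
          lam * q ^ 2 * (α ^ 2 * ((1 - Real.tanh (lam * t / 2) ^ 2) * (lam / 2)))) /
          (α ^ 2 * Real.tanh (lam * t / 2)) ^ 2) t := hlin3.sub hfrac_t
  have hfull_t : HasDerivAt (fun τ => ηs τ q)
      (C * (Real.exp (lam * t) * lam * (-(δ / 2)) * (Real.exp (lam * t) - 1) ^ (-(δ / 2) - 1)) *
          q ^ ((δ - 1) / 2) *
          Real.exp (lam * δ * t / 4 - lam * q ^ 2 / (α ^ 2 * Real.tanh (lam * t / 2))) +
        C * (Real.exp (lam * t) - 1) ^ (-(δ / 2)) * q ^ ((δ - 1) / 2) *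
          (Real.exp (lam * δ * t / 4 - lam * q ^ 2 / (α ^ 2 * Real.tanh (lam * t / 2))) *
            (lam * δ / 4 -
              (0 * (α ^ 2 * Real.tanh (lam * t / 2)) -
                lam * q ^ 2 * (α ^ 2 * ((1 - Real.tanh (lam * t / 2) ^ 2) * (lam / 2)))) /
                (α ^ 2 * Real.tanh (lam * t / 2)) ^ 2))) t := by
    have hfun1 : (fun τ => ηs τ q) = (fun τ =>
        C * (Real.exp (lam * τ) - 1) ^ (-(δ / 2)) * q ^ ((δ - 1) / 2) *
          Real.exp (lam * δ * τ / 4 - lam * q ^ 2 / (α ^ 2 * Real.tanh (lam * τ / 2)))) :=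
      funext fun τ => hηs τ q
    rw [hfun1]
    exact ((hpow_t.const_mul C).mul_const (q ^ ((δ - 1) / 2))).mul hGt.exp
  -- ===== first space derivative (at any x ≠ 0) =====
  have hfullq : ∀ x : ℝ, x ≠ 0 → HasDerivAt (ηs t)
      (C * (Real.exp (lam * t) - 1) ^ (-(δ / 2)) * (1 * ((δ - 1) / 2) * x ^ ((δ - 1) / 2 - 1)) *
          Real.exp (lam * δ * t / 4 - lam * x ^ 2 / (α ^ 2 * Real.tanh (lam * t / 2))) +
        C * (Real.exp (lam * t) - 1) ^ (-(δ / 2)) * x ^ ((δ - 1) / 2) *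
          (Real.exp (lam * δ * t / 4 - lam * x ^ 2 / (α ^ 2 * Real.tanh (lam * t / 2))) *
            (0 - lam * (2 * x) / (α ^ 2 * Real.tanh (lam * t / 2))))) x := by
    intro x hx
    have hfun2 : ηs t = (fun y =>
        C * (Real.exp (lam * t) - 1) ^ (-(δ / 2)) * y ^ ((δ - 1) / 2) *
          Real.exp (lam * δ * t / 4 - lam * y ^ 2 / (α ^ 2 * Real.tanh (lam * t / 2)))) :=
      funext fun y => hηs t y
    rw [hfun2]
    have hy2 : HasDerivAt (fun y : ℝ => y ^ 2) (2 * x) x := by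
      simpa using hasDerivAt_pow 2 x
    have harg : HasDerivAt
        (fun y => lam * δ * t / 4 - lam * y ^ 2 / (α ^ 2 * Real.tanh (lam * t / 2)))
        (0 - lam * (2 * x) / (α ^ 2 * Real.tanh (lam * t / 2))) x :=
      (hasDerivAt_const x (lam * δ * t / 4)).sub (((hy2.const_mul lam)).div_const _)
    have hr : HasDerivAt (fun y : ℝ => y ^ ((δ - 1) / 2))
        (1 * ((δ - 1) / 2) * x ^ ((δ - 1) / 2 - 1)) x :=
      (hasDerivAt_id' x).rpow_const (Or.inl hx)
    exact ((hr.const_mul (C * (Real.exp (lam * t) - 1) ^ (-(δ / 2)))).mul harg.exp)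
  -- ===== second space derivative =====
  have hD1f : deriv (deriv (ηs t)) q = deriv (fun x : ℝ =>
      C * (Real.exp (lam * t) - 1) ^ (-(δ / 2)) * (1 * ((δ - 1) / 2) * x ^ ((δ - 1) / 2 - 1)) *
          Real.exp (lam * δ * t / 4 - lam * x ^ 2 / (α ^ 2 * Real.tanh (lam * t / 2))) +
        C * (Real.exp (lam * t) - 1) ^ (-(δ / 2)) * x ^ ((δ - 1) / 2) *
          (Real.exp (lam * δ * t / 4 - lam * x ^ 2 / (α ^ 2 * Real.tanh (lam * t / 2))) *
            (0 - lam * (2 * x) / (α ^ 2 * Real.tanh (lam * t / 2))))) q := by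
    apply Filter.EventuallyEq.deriv_eq
    filter_upwards [Ioi_mem_nhds hq] with x hx
    exact (hfullq x (ne_of_gt hx)).deriv
  have hD2 : HasDerivAt (fun x : ℝ =>
      C * (Real.exp (lam * t) - 1) ^ (-(δ / 2)) * (1 * ((δ - 1) / 2) * x ^ ((δ - 1) / 2 - 1)) *
          Real.exp (lam * δ * t / 4 - lam * x ^ 2 / (α ^ 2 * Real.tanh (lam * t / 2))) +
        C * (Real.exp (lam * t) - 1) ^ (-(δ / 2)) * x ^ ((δ - 1) / 2) *
          (Real.exp (lam * δ * t / 4 - lam * x ^ 2 / (α ^ 2 * Real.tanh (lam * t / 2))) *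
            (0 - lam * (2 * x) / (α ^ 2 * Real.tanh (lam * t / 2)))))
      (C * (Real.exp (lam * t) - 1) ^ (-(δ / 2)) *
          (1 * ((δ - 1) / 2) * (1 * ((δ - 1) / 2 - 1) * q ^ ((δ - 1) / 2 - 1 - 1))) *
          Real.exp (lam * δ * t / 4 - lam * q ^ 2 / (α ^ 2 * Real.tanh (lam * t / 2))) +
        C * (Real.exp (lam * t) - 1) ^ (-(δ / 2)) * (1 * ((δ - 1) / 2) * q ^ ((δ - 1) / 2 - 1)) *
          (Real.exp (lam * δ * t / 4 - lam * q ^ 2 / (α ^ 2 * Real.tanh (lam * t / 2))) *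
            (0 - lam * (2 * q) / (α ^ 2 * Real.tanh (lam * t / 2)))) +
        (C * (Real.exp (lam * t) - 1) ^ (-(δ / 2)) * (1 * ((δ - 1) / 2) * q ^ ((δ - 1) / 2 - 1)) *
            (Real.exp (lam * δ * t / 4 - lam * q ^ 2 / (α ^ 2 * Real.tanh (lam * t / 2))) *
              (0 - lam * (2 * q) / (α ^ 2 * Real.tanh (lam * t / 2)))) +
          C * (Real.exp (lam * t) - 1) ^ (-(δ / 2)) * q ^ ((δ - 1) / 2) *
            (Real.exp (lam * δ * t / 4 - lam * q ^ 2 / (α ^ 2 * Real.tanh (lam * t / 2))) *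
                (0 - lam * (2 * q) / (α ^ 2 * Real.tanh (lam * t / 2))) *
                (0 - lam * (2 * q) / (α ^ 2 * Real.tanh (lam * t / 2))) +
              Real.exp (lam * δ * t / 4 - lam * q ^ 2 / (α ^ 2 * Real.tanh (lam * t / 2))) *
                (0 - lam * (2 * 1) / (α ^ 2 * Real.tanh (lam * t / 2))))))
      q := by
    have hy2 : HasDerivAt (fun y : ℝ => y ^ 2) (2 * q) q := by
      simpa using hasDerivAt_pow 2 q
    have harg : HasDerivAt
        (fun y : ℝ => lam * δ * t / 4 - lam * y ^ 2 / (α ^ 2 * Real.tanh (lam * t / 2)))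
        (0 - lam * (2 * q) / (α ^ 2 * Real.tanh (lam * t / 2))) q :=
      (hasDerivAt_const q (lam * δ * t / 4)).sub ((hy2.const_mul lam).div_const _)
    have hX := harg.exp
    have hr1 : HasDerivAt (fun x : ℝ => x ^ ((δ - 1) / 2 - 1))
        (1 * ((δ - 1) / 2 - 1) * q ^ ((δ - 1) / 2 - 1 - 1)) q :=
      (hasDerivAt_id' q).rpow_const (Or.inl hq0)
    have hr : HasDerivAt (fun x : ℝ => x ^ ((δ - 1) / 2))
        (1 * ((δ - 1) / 2) * q ^ ((δ - 1) / 2 - 1)) q :=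
      (hasDerivAt_id' q).rpow_const (Or.inl hq0)
    have hlinB : HasDerivAt
        (fun x : ℝ => 0 - lam * (2 * x) / (α ^ 2 * Real.tanh (lam * t / 2)))
        (0 - lam * (2 * 1) / (α ^ 2 * Real.tanh (lam * t / 2))) q :=
      (hasDerivAt_const q 0).sub
        ((((hasDerivAt_id' q).const_mul 2).const_mul lam).div_const _)
    exact (((hr1.const_mul (1 * ((δ - 1) / 2))).const_mul
        (C * (Real.exp (lam * t) - 1) ^ (-(δ / 2)))).mul hX).add
      ((hr.const_mul (C * (Real.exp (lam * t) - 1) ^ (-(δ / 2)))).mul (hX.mul hlinB))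
  rw [hD1f, hD2.deriv, hfull_t.deriv, hηs t q, hθ, hA, hB, hSval,
    Real.rpow_sub_one hq0 ((δ - 1) / 2 - 1), Real.rpow_sub_one hq0 ((δ - 1) / 2),
    Real.rpow_sub_one hE1 (-(δ / 2))]
  field_simp
  ring
end
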